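/- If M is an individual-rational and uniform matching between bids B = b::B' and asks A = a::A' (with b the most competitive bid and a the most competitive ask, both lists sorted by competitiveness) such that Q(M) ≥ min(q_b, q_a), then there exists an individual-rational and uniform matching M' between B and A such that Q(M') = Q(M) and the total traded quantity between b and a in M' equals min(q_b, q_a). -/

import Mathlib

structure Bid where
  id : ℕ
  timestamp : ℕ
  quantity : ℕ
  price : ℕ
deriving DecidableEq

structure Ask where
  id : ℕ
  timestamp : ℕ
  quantity : ℕ
  price : ℕ
deriving DecidableEq

structure Transaction where
  bid : Bid
  ask : Ask
  quantity : ℕ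
  price : ℕ
deriving DecidableEq

/-- Total traded quantity of a list of transactions. -/
def Qty (M : List Transaction) : ℕ := (M.map Transaction.quantity).sum

/-- Total traded quantity of bid `b` in `M`. -/
def QtyBid (b : Bid) (M : List Transaction) : ℕ :=
  ((M.filter (fun m => m.bid == b)).map Transaction.quantity).sum

/-- Total traded quantity of ask `a` in `M`. -/
def QtyAsk (a : Ask) (M : List Transaction) : ℕ :=
  ((M.filter (fun m => m.ask == a)).map Transaction.quantity).sum

/-- Total traded quantity between bid `b` and ask `a` in `M`. -/
def QtyBidAsk (b : Bid) (a : Ask) (M : List Transaction) : ℕ :=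
  ((M.filter (fun m => m.bid == b && m.ask == a)).map Transaction.quantity).sum

/-- Sum of quantities of a list of bids. -/
def QB (B : List Bid) : ℕ := (B.map Bid.quantity).sum

/-- Sum of quantities of a list of asks. -/
def QA (A : List Ask) : ℕ := (A.map Ask.quantity).sum

/-- `M` is a matching between bids `B` and asks `A`. -/
def Matching (B : List Bid) (A : List Ask) (M : List Transaction) : Prop :=
  (∀ m ∈ M, m.ask.price ≤ m.bid.price) ∧
  (∀ m ∈ M, m.bid ∈ B) ∧
  (∀ m ∈ M, m.ask ∈ A) ∧
  (∀ b ∈ B, QtyBid b M ≤ b.quantity) ∧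
  (∀ a ∈ A, QtyAsk a M ≤ a.quantity)

/-- Individual rationality. -/
def IsIR (M : List Transaction) : Prop :=
  ∀ m ∈ M, m.ask.price ≤ m.price ∧ m.price ≤ m.bid.price

/-- Uniformity: all trade prices equal. -/
def IsUniform (M : List Transaction) : Prop :=
  ∀ m1 ∈ M, ∀ m2 ∈ M, m1.price = m2.price

/-- `b1` is more competitive than `b2`. -/
def MoreCompetitiveBid (b1 b2 : Bid) : Prop :=
  b2.price < b1.price ∨ (b1.price = b2.price ∧ b1.timestamp < b2.timestamp)

/-- `a1` is more competitive than `a2`. -/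
def MoreCompetitiveAsk (a1 a2 : Ask) : Prop :=
  a1.price < a2.price ∨ (a1.price = a2.price ∧ a1.timestamp < a2.timestamp)

def FairOnBids (B : List Bid) (M : List Transaction) : Prop :=
  ∀ b1 ∈ B, ∀ b2 ∈ B, MoreCompetitiveBid b1 b2 → 1 ≤ QtyBid b2 M →
    QtyBid b1 M = b1.quantity

def FairOnAsks (A : List Ask) (M : List Transaction) : Prop :=
  ∀ a1 ∈ A, ∀ a2 ∈ A, MoreCompetitiveAsk a1 a2 → 1 ≤ QtyAsk a2 M →
    QtyAsk a1 M = a1.quantity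

def IsFair (B : List Bid) (A : List Ask) (M : List Transaction) : Prop :=
  FairOnBids B M ∧ FairOnAsks A M

/-- "at least as competitive as" order on bids (for sorting, most competitive first). -/
def BidGE (b1 b2 : Bid) : Prop := ¬ MoreCompetitiveBid b2 b1

/-- "at least as competitive as" order on asks (for sorting, most competitive first). -/
def AskGE (a1 a2 : Ask) : Prop := ¬ MoreCompetitiveAsk a2 a1

/-! ### Auxiliary machinery -/

/-- Greedy allocation of a total `T` across capacities. -/
def alloc {α : Type} (T : ℕ) : List (α × ℕ) → List (α × ℕ)
  | [] => []
  | (x, c) :: rest => (x, min T c) :: alloc (T - min T c) rest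

/-- Sum of the second components. -/
def sndSum {α : Type} (R : List (α × ℕ)) : ℕ := (R.map Prod.snd).sum

/-- Amount allocated to `x` in `R`. -/
def amt {α : Type} [DecidableEq α] (x : α) (R : List (α × ℕ)) : ℕ :=
  ((R.filter (fun r => r.1 == x)).map Prod.snd).sum

/-- Northwest-corner rule matrix construction as a list of transactions. -/
def NW (p : ℕ) : List (Bid × ℕ) → List (Ask × ℕ) → List Transaction
  | [], _ => []
  | _ :: _, [] => []
  | (x, β) :: rs, (y, σ) :: cs =>
    ⟨x, y, min β σ, p⟩ ::
      (if β ≤ σ then NW p rs ((y, σ - β) :: cs) else NW p ((x, β - σ) :: rs) cs)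
termination_by R C => R.length + C.length

theorem alloc_fst {α : Type} (T : ℕ) (C : List (α × ℕ)) :
    (alloc T C).map Prod.fst = C.map Prod.fst := by
  induction C generalizing T with
  | nil => rfl
  | cons c cs ih => obtain ⟨x, c⟩ := c; simp [alloc, ih]

theorem alloc_sndSum {α : Type} (T : ℕ) (C : List (α × ℕ)) :
    sndSum (alloc T C) = min T (sndSum C) := by
  induction C generalizing T with
  | nil => simp [alloc, sndSum]
  | cons c cs ih => obtain ⟨x, c⟩ := c; simp [alloc, sndSum] at ih ⊢; rw [ih]; omega

theorem alloc_mem {α : Type} (T : ℕ) (C : List (α × ℕ)) :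
    ∀ r ∈ alloc T C, ∃ c, (r.1, c) ∈ C ∧ r.2 ≤ c := by
  induction C generalizing T with
  | nil => simp [alloc]
  | cons c cs ih =>
    obtain ⟨x, c⟩ := c
    intro r hr
    rcases List.mem_cons.1 hr with h | h
    · subst h; exact ⟨c, by simp, by simp [min_le_right]⟩
    · obtain ⟨d, hd, hle⟩ := ih _ r h
      exact ⟨d, by simp [hd], hle⟩

theorem amt_alloc_le {α : Type} [DecidableEq α] (x : α) (T : ℕ) (C : List (α × ℕ)) :
    amt x (alloc T C) ≤ amt x C := by
  induction C generalizing T with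
  | nil => simp [alloc]
  | cons c cs ih =>
    obtain ⟨y, c⟩ := c
    simp only [alloc, amt, List.filter_cons]
    by_cases h : y = x
    · simp [h, amt] at ih ⊢
      exact Nat.add_le_add (min_le_right _ _) (ih _)
    · simpa [h, amt] using ih _
theorem amt_eq_zero {α : Type} [DecidableEq α] (x : α) (C : List (α × ℕ))
    (h : x ∉ C.map Prod.fst) : amt x C = 0 := by
  induction C with
  | nil => rfl
  | cons c cs ih =>
    obtain ⟨y, c⟩ := c
    simp at h
    simp [amt, List.filter_cons, h.1, Ne.symm h.1] at ih ⊢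
    exact ih h.2

theorem amt_map {α : Type} [DecidableEq α] (x : α) (L : List α) (f : α → ℕ)
    (hnd : L.Nodup) : amt x (L.map fun y => (y, f y)) = if x ∈ L then f x else 0 := by
  induction L with
  | nil => simp [amt]
  | cons y L ih =>
    simp at hnd
    by_cases h : y = x
    · subst h
      simp [amt, List.filter_cons, hnd.1]
      have := amt_eq_zero (α := α) y (L.map fun z => (z, f z)) (by simpa using hnd.1)
      simpa [amt] using this
    · simp [amt, List.filter_cons, h] at ih ⊢
      rw [ih hnd.2]
      simp [Ne.symm h]

theorem NW_price (p : ℕ) (R : List (Bid × ℕ)) (C : List (Ask × ℕ)) :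
    ∀ m ∈ NW p R C, m.price = p := by
  induction R, C using NW.induct with
  | case1 => simp [NW]
  | case2 => simp [NW]
  | case3 x β rs y σ cs ih1 ih2 =>
    intro m hm
    rw [NW] at hm
    by_cases hle : β ≤ σ <;> simp [hle] at hm <;>
      rcases hm with h | h
    · simp [h]
    · exact ih1 m h
    · simp [h]
    · exact ih2 m h
theorem NW_bid_mem (p : ℕ) (R : List (Bid × ℕ)) (C : List (Ask × ℕ)) :
    ∀ m ∈ NW p R C, m.bid ∈ R.map Prod.fst := by
  induction R, C using NW.induct with
  | case1 => simp [NW]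
  | case2 => simp [NW]
  | case3 x β rs y σ cs ih1 ih2 =>
    intro m hm
    rw [NW] at hm
    by_cases hle : β ≤ σ <;> simp [hle] at hm <;> rcases hm with h | h
    · simp [h]
    · simpa using Or.inr (by simpa using ih1 m h)
    · simp [h]
    · simpa using ih2 m h

theorem NW_ask_mem (p : ℕ) (R : List (Bid × ℕ)) (C : List (Ask × ℕ)) :
    ∀ m ∈ NW p R C, m.ask ∈ C.map Prod.fst := by
  induction R, C using NW.induct with
  | case1 => simp [NW]
  | case2 => simp [NW]
  | case3 x β rs y σ cs ih1 ih2 =>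
    intro m hm
    rw [NW] at hm
    by_cases hle : β ≤ σ <;> simp [hle] at hm <;> rcases hm with h | h
    · simp [h]
    · simpa using ih1 m h
    · simp [h]
    · simpa using Or.inr (by simpa using ih2 m h)

theorem NW_qty (p : ℕ) (R : List (Bid × ℕ)) (C : List (Ask × ℕ)) :
    Qty (NW p R C) = min (sndSum R) (sndSum C) := by
  induction R, C using NW.induct with
  | case1 => simp [NW, Qty, sndSum]
  | case2 => simp [NW, Qty, sndSum]
  | case3 x β rs y σ cs ih1 ih2 =>
    rw [NW]
    by_cases hle : β ≤ σ <;> simp [hle, Qty, sndSum] at ih1 ih2 ⊢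
    · rw [ih1]; omega
    · rw [ih2]; omega

theorem NW_qtyBid (p : ℕ) (R : List (Bid × ℕ)) (C : List (Ask × ℕ)) (z : Bid) :
    QtyBid z (NW p R C) ≤ amt z R := by
  induction R, C using NW.induct with
  | case1 => simp [NW, QtyBid]
  | case2 => simp [NW, QtyBid]
  | case3 x β rs y σ cs ih1 ih2 =>
    rw [NW]
    by_cases hle : β ≤ σ <;>
      by_cases hz : x = z <;>
      simp [hle, QtyBid, amt, List.filter_cons, hz] at ih1 ih2 ⊢ <;>
      omega

theorem NW_qtyAsk (p : ℕ) (R : List (Bid × ℕ)) (C : List (Ask × ℕ)) (z : Ask) :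
    QtyAsk z (NW p R C) ≤ amt z C := by
  induction R, C using NW.induct with
  | case1 => simp [NW, QtyAsk]
  | case2 => simp [NW, QtyAsk]
  | case3 x β rs y σ cs ih1 ih2 =>
    rw [NW]
    by_cases hle : β ≤ σ <;>
      by_cases hz : y = z <;>
      simp [hle, QtyAsk, amt, List.filter_cons, hz] at ih1 ih2 ⊢ <;>
      omega
theorem NW_pos (p : ℕ) (R : List (Bid × ℕ)) (C : List (Ask × ℕ))
    (hR : ∀ r ∈ R, 0 < r.2 → p ≤ r.1.price) (hC : ∀ c ∈ C, 0 < c.2 → c.1.price ≤ p) :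
    ∀ m ∈ NW p R C, 0 < m.quantity → m.ask.price ≤ p ∧ p ≤ m.bid.price := by
  induction R, C using NW.induct with
  | case1 => simp [NW]
  | case2 => simp [NW]
  | case3 x β rs y σ cs ih1 ih2 =>
    intro m hm hq
    rw [NW] at hm
    by_cases hle : β ≤ σ <;> simp [hle] at hm <;> rcases hm with h | h
    · subst h
      simp at hq ⊢
      exact ⟨hC (y, σ) (by simp) (by omega), hR (x, β) (by simp) (by omega)⟩
    · refine ih1 (fun r hr => hR r (by simp [hr])) ?_ m h hq
      intro c hc
      rcases List.mem_cons.1 hc with h' | h'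
      · subst h'; intro hpos; exact hC (y, σ) (by simp) (by omega)
      · exact hC c (by simp [h'])
    · subst h
      simp at hq ⊢
      exact ⟨hC (y, σ) (by simp) (by omega), hR (x, β) (by simp) (by omega)⟩
    · refine ih2 ?_ (fun c hc => hC c (by simp [hc])) m h hq
      intro r hr
      rcases List.mem_cons.1 hr with h' | h'
      · subst h'; intro hpos; exact hR (x, β) (by simp) (by omega)
      · exact hR r (by simp [h'])

theorem sum_nz (M : List Transaction) :
    ((M.filter fun m => m.quantity != 0).map Transaction.quantity).sum
      = (M.map Transaction.quantity).sum := by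
  induction M with
  | nil => rfl
  | cons m M ih => by_cases hq : m.quantity = 0 <;> simp [List.filter_cons, hq, ih]

/-- Dropping zero-quantity transactions does not change filtered quantity sums. -/
theorem sum_filter_nz (P : Transaction → Bool) (M : List Transaction) :
    (((M.filter fun m => m.quantity != 0).filter P).map Transaction.quantity).sum
      = ((M.filter P).map Transaction.quantity).sum := by
  rw [List.filter_comm]
  exact sum_nz (M.filter P)

theorem QtyBidAsk_le_QtyBid (b : Bid) (a : Ask) (M : List Transaction) :
    QtyBidAsk b a M ≤ QtyBid b M := by
  induction M with
  | nil => simp [QtyBidAsk, QtyBid]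
  | cons m M ih =>
    by_cases h1 : m.bid = b <;> by_cases h2 : m.ask = a <;>
      simp [QtyBidAsk, QtyBid, List.filter_cons, h1, h2] at ih ⊢ <;> omega

theorem QtyBidAsk_le_QtyAsk (b : Bid) (a : Ask) (M : List Transaction) :
    QtyBidAsk b a M ≤ QtyAsk a M := by
  induction M with
  | nil => simp [QtyBidAsk, QtyAsk]
  | cons m M ih =>
    by_cases h1 : m.bid = b <;> by_cases h2 : m.ask = a <;>
      simp [QtyBidAsk, QtyAsk, List.filter_cons, h1, h2] at ih ⊢ <;> omega

theorem sum_map_ite {α : Type} [DecidableEq α] (L : List α) (c : α) (v : ℕ)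
    (hnd : L.Nodup) (hc : c ∈ L) : (L.map fun x => if c = x then v else 0).sum = v := by
  induction L with
  | nil => simp at hc
  | cons y L ih =>
    simp at hnd
    rcases List.mem_cons.1 hc with h | h
    · subst h
      rw [List.map_cons, List.sum_cons, if_pos rfl]
      have : (L.map fun x => if c = x then v else 0).sum = 0 := by
        apply List.sum_eq_zero
        intro z hz
        simp only [List.mem_map] at hz
        obtain ⟨x, hx, rfl⟩ := hz
        have : c ≠ x := by intro he; exact hnd.1 (he ▸ hx)
        simp [this]
      omega
    · have hcy : c ≠ y := by intro he; exact hnd.1 (he ▸ h)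
      rw [List.map_cons, List.sum_cons, if_neg hcy, ih hnd.2 h]; omega

theorem sum_QtyBid (L : List Bid) (M : List Transaction) (hnd : L.Nodup)
    (hmem : ∀ m ∈ M, m.bid ∈ L) : (L.map fun x => QtyBid x M).sum = Qty M := by
  induction M with
  | nil => simp [QtyBid, Qty]
  | cons m M ih =>
    have h1 : ∀ x, QtyBid x (m :: M) = (if m.bid = x then m.quantity else 0) + QtyBid x M := by
      intro x
      by_cases h : m.bid = x <;> simp [QtyBid, List.filter_cons, h]
    have : (L.map fun x => QtyBid x (m :: M)).sum
        = (L.map fun x => if m.bid = x then m.quantity else 0).sum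
          + (L.map fun x => QtyBid x M).sum := by
      simp only [h1]
      induction L with
      | nil => simp
      | cons y L ihL => simp at ihL ⊢; omega
    rw [this, sum_map_ite L m.bid m.quantity hnd (hmem m (by simp)),
      ih (fun m' hm' => hmem m' (by simp [hm']))]
    simp [Qty]

theorem sum_QtyAsk (L : List Ask) (M : List Transaction) (hnd : L.Nodup)
    (hmem : ∀ m ∈ M, m.ask ∈ L) : (L.map fun x => QtyAsk x M).sum = Qty M := by
  induction M with
  | nil => simp [QtyAsk, Qty]
  | cons m M ih =>
    have h1 : ∀ x, QtyAsk x (m :: M) = (if m.ask = x then m.quantity else 0) + QtyAsk x M := by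
      intro x
      by_cases h : m.ask = x <;> simp [QtyAsk, List.filter_cons, h]
    have : (L.map fun x => QtyAsk x (m :: M)).sum
        = (L.map fun x => if m.ask = x then m.quantity else 0).sum
          + (L.map fun x => QtyAsk x M).sum := by
      simp only [h1]
      induction L with
      | nil => simp
      | cons y L ihL => simp at ihL ⊢; omega
    rw [this, sum_map_ite L m.ask m.quantity hnd (hmem m (by simp)),
      ih (fun m' hm' => hmem m' (by simp [hm']))]
    simp [Qty]
theorem amt_cons {α : Type} [DecidableEq α] (x y : α) (c : ℕ) (rest : List (α × ℕ)) :
    amt x ((y, c) :: rest) = (if y = x then c else 0) + amt x rest := by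
  by_cases h : y = x <;> simp [amt, List.filter_cons, h]

theorem exists_of_qtyBid_pos (x : Bid) (M : List Transaction) (h : 0 < QtyBid x M) :
    ∃ m ∈ M, m.bid = x := by
  induction M with
  | nil => simp [QtyBid] at h
  | cons m M ih =>
    by_cases hm : m.bid = x
    · exact ⟨m, by simp, hm⟩
    · simp [QtyBid, List.filter_cons, hm] at h
      obtain ⟨m', hm', h'⟩ := ih h
      exact ⟨m', by simp [hm'], h'⟩

theorem exists_of_qtyAsk_pos (x : Ask) (M : List Transaction) (h : 0 < QtyAsk x M) :
    ∃ m ∈ M, m.ask = x := by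
  induction M with
  | nil => simp [QtyAsk] at h
  | cons m M ih =>
    by_cases hm : m.ask = x
    · exact ⟨m, by simp, hm⟩
    · simp [QtyAsk, List.filter_cons, hm] at h
      obtain ⟨m', hm', h'⟩ := ih h
      exact ⟨m', by simp [hm'], h'⟩
theorem statement_12 (b : Bid) (B' : List Bid) (a : Ask) (A' : List Ask)
    (M : List Transaction)
    (hB : (((b :: B').map Bid.id)).Nodup) (hA : (((a :: A').map Ask.id)).Nodup)
    (hsB : List.Pairwise BidGE (b :: B')) (hsA : List.Pairwise AskGE (a :: A'))
    (hM : Matching (b :: B') (a :: A') M) (hIR : IsIR M) (hU : IsUniform M)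
    (hQ : min b.quantity a.quantity ≤ Qty M) :
    ∃ M', Matching (b :: B') (a :: A') M' ∧ IsIR M' ∧ IsUniform M' ∧
      Qty M' = Qty M ∧ QtyBidAsk b a M' = min b.quantity a.quantity := by
  obtain ⟨hMprice, hMbid, hMask, hMcapB, hMcapA⟩ := hM
  set q := min b.quantity a.quantity with hq
  set T := Qty M with hT
  -- trivial case
  by_cases hq0 : q = 0
  · refine ⟨M, ⟨hMprice, hMbid, hMask, hMcapB, hMcapA⟩, hIR, hU, rfl, ?_⟩
    have h1 := QtyBidAsk_le_QtyBid b a M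
    have h2 := QtyBidAsk_le_QtyAsk b a M
    have h3 := hMcapB b (by simp)
    have h4 := hMcapA a (by simp)
    omega
  -- main case
  have hqpos : 0 < q := Nat.pos_of_ne_zero hq0
  have hTpos : 0 < T := lt_of_lt_of_le hqpos hQ
  have hMne : M ≠ [] := by
    intro h; rw [h] at hT; simp [Qty] at hT; omega
  obtain ⟨m0, hm0⟩ := List.exists_mem_of_ne_nil M hMne
  set p := m0.price with hp
  have hup : ∀ m ∈ M, m.price = p := fun m hm => hU m hm m0 hm0
  -- nodups
  have hndB : (b :: B').Nodup := hB.of_map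
  have hndA : (a :: A').Nodup := hA.of_map
  have hbB' : b ∉ B' := by
    simp at hndB; exact hndB.1
  have haA' : a ∉ A' := by
    simp at hndA; exact hndA.1
  -- sortedness facts
  have hsB' : ∀ x ∈ B', x.price ≤ b.price := by
    intro x hx
    have := (List.pairwise_cons.1 hsB).1 x hx
    unfold BidGE MoreCompetitiveBid at this
    push_neg at this
    exact this.1
  have hsA' : ∀ x ∈ A', a.price ≤ x.price := by
    intro x hx
    have := (List.pairwise_cons.1 hsA).1 x hx
    unfold AskGE MoreCompetitiveAsk at this
    push_neg at this
    exact this.1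
  -- price bounds for b and a
  have hpb : p ≤ b.price := by
    have h1 := (hIR m0 hm0).2
    have h2 := hMbid m0 hm0
    rcases List.mem_cons.1 h2 with h | h
    · rw [← h]; exact h1
    · exact h1.trans (hsB' _ h)
  have hap : a.price ≤ p := by
    have h1 := (hIR m0 hm0).1
    have h2 := hMask m0 hm0
    rcases List.mem_cons.1 h2 with h | h
    · rw [← h]; exact h1
    · exact (hsA' _ h).trans h1
  -- marginals
  set d : Bid → ℕ := fun x => QtyBid x M with hd
  set s : Ask → ℕ := fun y => QtyAsk y M with hs
  set βb := max (d b) q with hβb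
  set σa := max (s a) q with hσa
  set capsR : List (Bid × ℕ) := (b, βb) :: B'.map (fun x => (x, d x)) with hcapsR
  set capsC : List (Ask × ℕ) := (a, σa) :: A'.map (fun y => (y, s y)) with hcapsC
  have hsumB : d b + (B'.map d).sum = T := by
    have := sum_QtyBid (b :: B') M hndB hMbid
    simpa using this
  have hsumA : s a + (A'.map s).sum = T := by
    have := sum_QtyAsk (a :: A') M hndA hMask
    simpa using this
  have hdbT : d b ≤ T := by omega
  have hsaT : s a ≤ T := by omega
  have hβbT : βb ≤ T := by
    have : q ≤ T := hQ
    omega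
  have hσaT : σa ≤ T := by
    have : q ≤ T := hQ
    omega
  have hsndR : sndSum capsR = βb + (B'.map d).sum := by
    simp only [sndSum, hcapsR, List.map_cons, List.sum_cons, List.map_map]
    congr 1
  have hsndC : sndSum capsC = σa + (A'.map s).sum := by
    simp only [sndSum, hcapsC, List.map_cons, List.sum_cons, List.map_map]
    congr 1
  have hsndRT : T ≤ sndSum capsR := by rw [hsndR]; omega
  have hsndCT : T ≤ sndSum capsC := by rw [hsndC]; omega
  set rows := alloc T capsR with hrows
  set cols := alloc T capsC with hcols
  have hrows' : rows = (b, βb) :: alloc (T - βb) (B'.map (fun x => (x, d x))) := by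
    rw [hrows, hcapsR]
    simp [alloc, min_eq_right hβbT]
  have hcols' : cols = (a, σa) :: alloc (T - σa) (A'.map (fun y => (y, s y))) := by
    rw [hcols, hcapsC]
    simp [alloc, min_eq_right hσaT]
  have hrowsum : sndSum rows = T := by
    rw [hrows, alloc_sndSum]; omega
  have hcolsum : sndSum cols = T := by
    rw [hcols, alloc_sndSum]; omega
  have hβbq : βb ≤ b.quantity := by
    have := hMcapB b (by simp)
    simp [hβb, hd]; omega
  have hσaq : σa ≤ a.quantity := by
    have := hMcapA a (by simp)
    simp [hσa, hs]; omega
  have hminq : min βb σa = q := by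
    have h1 : q ≤ βb := by omega
    have h2 : q ≤ σa := by omega
    omega
  -- positivity invariants
  have hRpos : ∀ r ∈ rows, 0 < r.2 → p ≤ r.1.price := by
    intro r hr hpos
    obtain ⟨c, hc, hle⟩ := alloc_mem T capsR r hr
    rcases List.mem_cons.1 hc with h | h
    · have : r.1 = b := congrArg Prod.fst h
      rw [this]; exact hpb
    · simp only [List.mem_map] at h
      obtain ⟨x, hx, hxe⟩ := h
      have hcx : c = d x := (congrArg Prod.snd hxe).symm
      have hr1x : r.1 = x := (congrArg Prod.fst hxe).symm
      have hdx : 0 < d x := by omega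
      obtain ⟨m, hm, hmb⟩ := exists_of_qtyBid_pos x M hdx
      rw [hr1x, ← hmb]
      rw [← hup m hm]
      exact (hIR m hm).2
  have hCpos : ∀ c ∈ cols, 0 < c.2 → c.1.price ≤ p := by
    intro r hr hpos
    obtain ⟨c, hc, hle⟩ := alloc_mem T capsC r hr
    rcases List.mem_cons.1 hc with h | h
    · have : r.1 = a := congrArg Prod.fst h
      rw [this]; exact hap
    · simp only [List.mem_map] at h
      obtain ⟨x, hx, hxe⟩ := h
      have hcx : c = s x := (congrArg Prod.snd hxe).symm
      have hr1x : r.1 = x := (congrArg Prod.fst hxe).symm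
      have hsx : 0 < s x := by omega
      obtain ⟨m, hm, hma⟩ := exists_of_qtyAsk_pos x M hsx
      rw [hr1x, ← hma]
      rw [← hup m hm]
      exact (hIR m hm).1
  -- the construction
  set M'' := NW p rows cols with hM''
  set M' := M''.filter (fun m => m.quantity != 0) with hM'
  have hsub : ∀ m ∈ M', m ∈ M'' ∧ m.quantity ≠ 0 := by
    intro m hm
    rw [hM', List.mem_filter] at hm
    exact ⟨hm.1, by simpa using hm.2⟩
  have hfstR : rows.map Prod.fst = b :: B' := by
    rw [hrows, alloc_fst, hcapsR]
    simp only [List.map_cons, List.map_map]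
    have h : (Prod.fst ∘ fun x : Bid => (x, d x)) = id := rfl
    rw [h, List.map_id]
  have hfstC : cols.map Prod.fst = a :: A' := by
    rw [hcols, alloc_fst, hcapsC]
    simp only [List.map_cons, List.map_map]
    have h : (Prod.fst ∘ fun y : Ask => (y, s y)) = id := rfl
    rw [h, List.map_id]
  -- quantity bounds transfer
  have hQtyBidM' : ∀ x, QtyBid x M' = QtyBid x M'' := by
    intro x
    rw [hM']
    exact sum_filter_nz (fun m => m.bid == x) M''
  have hQtyAskM' : ∀ x, QtyAsk x M' = QtyAsk x M'' := by
    intro x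
    rw [hM']
    exact sum_filter_nz (fun m => m.ask == x) M''
  have hamtR : ∀ x ∈ b :: B', amt x rows ≤ x.quantity := by
    intro x hx
    have h1 : amt x rows ≤ amt x capsR := amt_alloc_le x T capsR
    rcases List.mem_cons.1 hx with h | h
    · subst h
      have : amt x capsR = βb + amt x (B'.map (fun y => (y, d y))) := by
        rw [hcapsR, amt_cons]; simp
      rw [this, amt_map x B' d (by simpa using hndB.of_cons), if_neg hbB'] at h1
      omega
    · have hxb : b ≠ x := by intro he; exact hbB' (he ▸ h)
      have : amt x capsR = amt x (B'.map (fun y => (y, d y))) := by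
        rw [hcapsR, amt_cons, if_neg hxb]; omega
      rw [this, amt_map x B' d (by simpa using hndB.of_cons), if_pos h] at h1
      exact h1.trans (hMcapB x hx)
  have hamtC : ∀ x ∈ a :: A', amt x cols ≤ x.quantity := by
    intro x hx
    have h1 : amt x cols ≤ amt x capsC := amt_alloc_le x T capsC
    rcases List.mem_cons.1 hx with h | h
    · subst h
      have : amt x capsC = σa + amt x (A'.map (fun y => (y, s y))) := by
        rw [hcapsC, amt_cons]; simp
      rw [this, amt_map x A' s (by simpa using hndA.of_cons), if_neg haA'] at h1
      omega
    · have hxa : a ≠ x := by intro he; exact haA' (he ▸ h)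
      have : amt x capsC = amt x (A'.map (fun y => (y, s y))) := by
        rw [hcapsC, amt_cons, if_neg hxa]; omega
      rw [this, amt_map x A' s (by simpa using hndA.of_cons), if_pos h] at h1
      exact h1.trans (hMcapA x hx)
  refine ⟨M', ⟨?_, ?_, ?_, ?_, ?_⟩, ?_, ?_, ?_, ?_⟩
  · -- prices cross
    intro m hm
    obtain ⟨hm'', hnz⟩ := hsub m hm
    have := NW_pos p rows cols hRpos hCpos m hm'' (Nat.pos_of_ne_zero hnz)
    omega
  · -- bids mem
    intro m hm
    have := NW_bid_mem p rows cols m (hsub m hm).1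
    rwa [hfstR] at this
  · -- asks mem
    intro m hm
    have := NW_ask_mem p rows cols m (hsub m hm).1
    rwa [hfstC] at this
  · -- bid capacities
    intro x hx
    rw [hQtyBidM' x]
    exact (NW_qtyBid p rows cols x).trans (hamtR x hx)
  · -- ask capacities
    intro x hx
    rw [hQtyAskM' x]
    exact (NW_qtyAsk p rows cols x).trans (hamtC x hx)
  · -- IR
    intro m hm
    obtain ⟨hm'', hnz⟩ := hsub m hm
    have h1 := NW_pos p rows cols hRpos hCpos m hm'' (Nat.pos_of_ne_zero hnz)
    have h2 := NW_price p rows cols m hm''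
    rw [h2]; exact h1
  · -- uniform
    intro m1 hm1 m2 hm2
    rw [NW_price p rows cols m1 (hsub m1 hm1).1, NW_price p rows cols m2 (hsub m2 hm2).1]
  · -- total quantity
    have h1 : Qty M' = Qty M'' := by
      rw [hM', hM'']
      exact sum_nz _
    rw [h1, hM'', NW_qty, hrowsum, hcolsum]
    omega
  · -- traded quantity between b and a
    have h1 : QtyBidAsk b a M' = QtyBidAsk b a M'' := by
      rw [hM']
      exact sum_filter_nz (fun m => m.bid == b && m.ask == a) M''
    rw [h1, hM'', hrows', hcols', NW]
    by_cases hle : βb ≤ σa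
    · simp only [hle, if_true]
      have hzero : QtyBidAsk b a (NW p (alloc (T - βb) (B'.map (fun x => (x, d x))))
          ((a, σa - βb) :: alloc (T - σa) (A'.map (fun y => (y, s y))))) = 0 := by
        have h2 := QtyBidAsk_le_QtyBid b a (NW p (alloc (T - βb) (B'.map (fun x => (x, d x))))
          ((a, σa - βb) :: alloc (T - σa) (A'.map (fun y => (y, s y)))))
        have h3 := NW_qtyBid p (alloc (T - βb) (B'.map (fun x => (x, d x))))
          ((a, σa - βb) :: alloc (T - σa) (A'.map (fun y => (y, s y)))) b
        have h4 : amt b (alloc (T - βb) (B'.map (fun x => (x, d x)))) = 0 := by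
          apply amt_eq_zero
          rw [alloc_fst]
          simpa using hbB'
        omega
      simp only [QtyBidAsk, List.filter_cons, beq_self_eq_true, Bool.and_self, if_true,
        List.map_cons, List.sum_cons] at hzero ⊢
      rw [hzero]
      simpa using hminq
    · simp only [hle, if_false]
      have hzero : QtyBidAsk b a (NW p
          ((b, βb - σa) :: alloc (T - βb) (B'.map (fun x => (x, d x))))
          (alloc (T - σa) (A'.map (fun y => (y, s y))))) = 0 := by
        have h2 := QtyBidAsk_le_QtyAsk b a
          (NW p ((b, βb - σa) :: alloc (T - βb) (B'.map (fun x => (x, d x))))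
          (alloc (T - σa) (A'.map (fun y => (y, s y)))))
        have h3 := NW_qtyAsk p ((b, βb - σa) :: alloc (T - βb) (B'.map (fun x => (x, d x))))
          (alloc (T - σa) (A'.map (fun y => (y, s y)))) a
        have h4 : amt a (alloc (T - σa) (A'.map (fun y => (y, s y)))) = 0 := by
          apply amt_eq_zero
          rw [alloc_fst]
          simpa using haA'
        omega
      simp only [QtyBidAsk, List.filter_cons, beq_self_eq_true, Bool.and_self, if_true,
        List.map_cons, List.sum_cons] at hzero ⊢
      rw [hzero]
      simpa using hminq
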